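/- arXiv:1907.03262 — 3 statements merged into one kernel-verified Lean document; each statement's English description precedes it below -/
import Mathlib

section
/- Let α ≥ 1 be an integer, L = 2^α, Δ > 0 and p > 0. For the midrise uniform quantizer h_{L,Δ} and the centered Gaussian density f_p, the Bussgang gain a := (1/p) ∫_{-∞}^{∞} z · h_{L,Δ}(z) · f_p(z) dz satisfies a = (Δ/√(2πp)) · (1 + 2·Σ_{l=1}^{L/2−1} exp(−l²Δ²/(2p))). (This is Lemma 1, formula for a, with the constant matching the derivation in Appendix A; equivalently a = Δ√(2/(πp))·(1/2 + Σ_{l=1}^{L/2−1} exp(−l²Δ²/(2p))).) -/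
open MeasureTheory Real Finset

/-- The midrise uniform quantizer with `L` levels and step size `Δ`. -/
noncomputable def midrise (L : ℕ) (Δ : ℝ) (z : ℝ) : ℝ :=
  if z < (-(L : ℝ) / 2 + 1) * Δ then -(((L : ℝ) - 1) / 2) * Δ
  else if ((L : ℝ) / 2 - 1) * Δ ≤ z then ((L : ℝ) - 1) / 2 * Δ
  else ((⌊z / Δ⌋ : ℝ) + 1 / 2) * Δ

/-- Density of a centered real Gaussian with variance `p`. -/
noncomputable def gaussPDF (p : ℝ) (z : ℝ) : ℝ :=
  (Real.sqrt (2 * Real.pi * p))⁻¹ * Real.exp (-(z ^ 2) / (2 * p))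

lemma aux_sum_ite (N : ℕ) (m : ℤ) :
    ∑ l ∈ Finset.Icc 1 N, (if (l : ℤ) ≤ m then (1 : ℝ) else 0)
      = ((min (max m 0) (N : ℤ) : ℤ) : ℝ) := by
  induction N with
  | zero =>
      have : min (max m 0) ((0 : ℕ) : ℤ) = 0 := by omega
      simp [this]
  | succ n ih =>
      rw [Finset.sum_Icc_succ_top (by omega : 1 ≤ n + 1), ih]
      by_cases h : ((n : ℤ) + 1) ≤ m
      · rw [if_pos (by push_cast; omega)]
        have e : (min (max m 0) (((n + 1 : ℕ)) : ℤ)) = min (max m 0) ((n : ℕ) : ℤ) + 1 := by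
          push_cast; omega
        rw [e]; push_cast; ring
      · rw [if_neg (by push_cast; omega)]
        have e : (min (max m 0) (((n + 1 : ℕ)) : ℤ)) = min (max m 0) ((n : ℕ) : ℤ) := by
          push_cast; omega
        rw [e]; push_cast; ring

lemma midrise_eq (N : ℕ) (Δ : ℝ) (hΔ : 0 < Δ) (z : ℝ) :
    midrise (2 * N + 2) Δ z
      = Δ * ((1 / 2) * ((if (0 : ℝ) ≤ z then (1 : ℝ) else 0) - (if z < 0 then (1 : ℝ) else 0))
          + ∑ l ∈ Finset.Icc 1 N, ((if (l : ℝ) * Δ ≤ z then (1 : ℝ) else 0)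
              - (if z < -((l : ℝ) * Δ) then (1 : ℝ) else 0))) := by
  set k := ⌊z / Δ⌋ with hk
  have hiff1 : ∀ l : ℕ, ((l : ℝ) * Δ ≤ z) ↔ ((l : ℤ) ≤ k) := by
    intro l
    rw [hk, Int.le_floor, le_div_iff₀ hΔ]
    push_cast
    rfl
  have hiff2 : ∀ l : ℕ, (z < -((l : ℝ) * Δ)) ↔ ((l : ℤ) ≤ -k - 1) := by
    intro l
    constructor
    · intro h
      have h3 : k < -(l : ℤ) :=
        Int.floor_lt.2 (by push_cast; rw [div_lt_iff₀ hΔ]; linarith)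
      omega
    · intro h
      have h2 : k < -(l : ℤ) := by omega
      have h3 := Int.floor_lt.1 h2
      push_cast at h3
      rw [div_lt_iff₀ hΔ] at h3
      linarith
  have h0 : ((0 : ℝ) ≤ z) ↔ (0 ≤ k) := by
    rw [hk, Int.le_floor]
    push_cast
    rw [le_div_iff₀ hΔ]
    simp
  have hz0 : (z < 0) ↔ (k < 0) := by
    rw [← not_le, ← not_le, h0]
  simp only [hiff1, hiff2, h0, hz0]
  rw [Finset.sum_sub_distrib, aux_sum_ite, aux_sum_ite]
  rw [midrise,
    show (-(((2 * N + 2 : ℕ)) : ℝ) / 2 + 1) * Δ = -(N : ℝ) * Δ by push_cast; ring,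
    show ((((2 * N + 2 : ℕ)) : ℝ) / 2 - 1) * Δ = (N : ℝ) * Δ by push_cast; ring,
    show ((((2 * N + 2 : ℕ)) : ℝ) - 1) / 2 = (N : ℝ) + 1 / 2 by push_cast; ring]
  by_cases hlow : z < -(N : ℝ) * Δ
  · have h1 : k < -(N : ℤ) :=
      Int.floor_lt.2 (by push_cast; rw [div_lt_iff₀ hΔ]; linarith)
    rw [if_pos hlow, if_neg (by omega : ¬ (0 : ℤ) ≤ k), if_pos (by omega : k < 0),
      show min (max k 0) (N : ℤ) = 0 by omega,
      show min (max (-k - 1) 0) (N : ℤ) = N by omega]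
    push_cast; ring
  · by_cases hhigh : (N : ℝ) * Δ ≤ z
    · have h1 : (N : ℤ) ≤ k :=
        Int.le_floor.2 (by push_cast; rw [le_div_iff₀ hΔ]; linarith)
      rw [if_neg hlow, if_pos hhigh, if_pos (by omega : (0 : ℤ) ≤ k),
        if_neg (by omega : ¬ k < 0),
        show min (max k 0) (N : ℤ) = N by omega,
        show min (max (-k - 1) 0) (N : ℤ) = 0 by omega]
      push_cast; ring
    · push_neg at hlow hhigh
      have h1 : -(N : ℤ) ≤ k :=
        Int.le_floor.2 (by push_cast; rw [le_div_iff₀ hΔ]; linarith)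
      have h2 : k < (N : ℤ) :=
        Int.floor_lt.2 (by push_cast; rw [div_lt_iff₀ hΔ]; linarith)
      rw [if_neg (not_lt.2 hlow), if_neg (not_le.2 hhigh)]
      by_cases hk0 : (0 : ℤ) ≤ k
      · rw [if_pos hk0, if_neg (by omega),
          show min (max k 0) (N : ℤ) = k by omega,
          show min (max (-k - 1) 0) (N : ℤ) = 0 by omega]
        push_cast; ring
      · rw [if_neg hk0, if_pos (by omega),
          show min (max k 0) (N : ℤ) = 0 by omega,
          show min (max (-k - 1) 0) (N : ℤ) = -k - 1 by omega]
        push_cast; ring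

lemma gaussPDF_nonneg (p z : ℝ) : 0 ≤ gaussPDF p z :=
  mul_nonneg (inv_nonneg.2 (Real.sqrt_nonneg _)) (Real.exp_pos _).le

lemma integrable_G (p : ℝ) (hp : 0 < p) : Integrable (fun z : ℝ => z * gaussPDF p z) := by
  have h := (integrable_mul_exp_neg_mul_sq (b := (2 * p)⁻¹) (by positivity)).const_mul
    ((Real.sqrt (2 * Real.pi * p))⁻¹)
  have e : (fun z : ℝ => z * gaussPDF p z)
      = fun x : ℝ => (Real.sqrt (2 * Real.pi * p))⁻¹ * (x * Real.exp (-(2 * p)⁻¹ * x ^ 2)) := by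
    funext x
    rw [gaussPDF, show -(x ^ 2) / (2 * p) = -(2 * p)⁻¹ * x ^ 2 by ring]
    ring
  rw [e]; exact h

lemma integral_Ioi_G (p c : ℝ) (hp : 0 < p) (hc : 0 ≤ c) :
    ∫ z in Set.Ioi c, z * gaussPDF p z = p * gaussPDF p c := by
  have hcont : Continuous fun z : ℝ => -(p * gaussPDF p z) := by
    unfold gaussPDF; fun_prop
  have hderiv : ∀ x ∈ Set.Ioi c, HasDerivAt (fun z : ℝ => -(p * gaussPDF p z))
      (x * gaussPDF p x) x := by
    intro x _
    have h1 : HasDerivAt (fun z : ℝ => -(z ^ 2) / (2 * p)) (-(2 * x) / (2 * p)) x := by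
      have h := ((hasDerivAt_pow 2 x).neg).div_const (2 * p)
      exact h.congr_deriv (by norm_num)
    have h2 := h1.exp
    have h3 := (h2.const_mul (Real.sqrt (2 * Real.pi * p))⁻¹).const_mul p
    have h4 := h3.neg
    refine h4.congr_deriv ?_
    rw [gaussPDF]
    field_simp
  have hpos : ∀ x ∈ Set.Ioi c, 0 ≤ x * gaussPDF p x := by
    intro x hx
    exact mul_nonneg (le_trans hc (le_of_lt hx)) (gaussPDF_nonneg p x)
  have htend : Filter.Tendsto (fun z : ℝ => -(p * gaussPDF p z)) Filter.atTop (nhds 0) := by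
    have h1 : Filter.Tendsto (fun z : ℝ => -(z ^ 2) / (2 * p)) Filter.atTop Filter.atBot := by
      apply Filter.Tendsto.atBot_div_const (by positivity)
      exact Filter.tendsto_neg_atBot_iff.2 (Filter.tendsto_pow_atTop (by norm_num))
    have h2 := Real.tendsto_exp_atBot.comp h1
    have h3 := ((h2.const_mul (Real.sqrt (2 * Real.pi * p))⁻¹).const_mul p).neg
    simpa [gaussPDF, Function.comp] using h3
  have := integral_Ioi_of_hasDerivAt_of_nonneg (hcont.continuousWithinAt) hderiv hpos htend
  rw [this]; ring

lemma integral_Iio_G (p c : ℝ) (hp : 0 < p) (hc : 0 ≤ c) :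
    ∫ z in Set.Iio (-c), z * gaussPDF p z = -(p * gaussPDF p c) := by
  rw [← integral_Iic_eq_integral_Iio, ← integral_comp_neg_Ioi]
  have e : (fun x : ℝ => (-x) * gaussPDF p (-x)) = fun x : ℝ => -(x * gaussPDF p x) := by
    funext x; rw [gaussPDF, gaussPDF, neg_sq]; ring
  calc ∫ x in Set.Ioi c, (-x) * gaussPDF p (-x)
      = ∫ x in Set.Ioi c, -(x * gaussPDF p x) := by rw [e]
    _ = -(∫ x in Set.Ioi c, x * gaussPDF p x) := by rw [integral_neg]
    _ = -(p * gaussPDF p c) := by rw [integral_Ioi_G p c hp hc]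

/-- Lemma 1 of the paper, formula for the Bussgang gain `a`. -/
theorem bussgang_gain_midrise (α : ℕ) (hα : 1 ≤ α) (Δ p : ℝ) (hΔ : 0 < Δ) (hp : 0 < p) :
    (1 / p) * ∫ z : ℝ, z * midrise (2 ^ α) Δ z * gaussPDF p z
      = Δ / Real.sqrt (2 * Real.pi * p) *
        (1 + 2 * ∑ l ∈ Finset.Icc 1 (2 ^ α / 2 - 1 : ℕ),
            Real.exp (-((l : ℝ) ^ 2 * Δ ^ 2) / (2 * p))) := by
  obtain ⟨β, rfl⟩ : ∃ β, α = β + 1 := ⟨α - 1, (Nat.succ_pred_eq_of_pos hα).symm⟩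
  set N : ℕ := 2 ^ β - 1 with hNdef
  have h2b : (1 : ℕ) ≤ 2 ^ β := Nat.one_le_two_pow
  have hps : (2 : ℕ) ^ (β + 1) = 2 ^ β * 2 := pow_succ 2 β
  have hL : (2 : ℕ) ^ (β + 1) = 2 * N + 2 := by omega
  have hNidx : (2 ^ (β + 1) / 2 - 1 : ℕ) = N := by omega
  set G : ℝ → ℝ := fun z => z * gaussPDF p z with hG
  have hGint : Integrable G := integrable_G p hp
  have key : ∀ z : ℝ, z * midrise (2 ^ (β + 1)) Δ z * gaussPDF p z
      = Δ * ((1 / 2) * ((Set.Ici (0 : ℝ)).indicator G z - (Set.Iio (0 : ℝ)).indicator G z)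
          + ∑ l ∈ Finset.Icc 1 N, ((Set.Ici ((l : ℝ) * Δ)).indicator G z
              - (Set.Iio (-((l : ℝ) * Δ))).indicator G z)) := by
    intro z
    rw [hL, midrise_eq N Δ hΔ z,
      show ∀ a : ℝ, z * (Δ * a) * gaussPDF p z = Δ * (a * (z * gaussPDF p z)) from
        fun a => by ring]
    congr 1
    simp only [hG, Set.indicator_apply, Set.mem_Ici, Set.mem_Iio, add_mul, sub_mul,
      Finset.sum_mul, ite_mul, one_mul, zero_mul, mul_assoc]
  have hIci : ∀ c : ℝ, Integrable ((Set.Ici c).indicator G) :=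
    fun c => hGint.indicator measurableSet_Ici
  have hIio : ∀ c : ℝ, Integrable ((Set.Iio c).indicator G) :=
    fun c => hGint.indicator measurableSet_Iio
  have hA : Integrable (fun z : ℝ =>
      (1 / 2) * ((Set.Ici (0 : ℝ)).indicator G z - (Set.Iio (0 : ℝ)).indicator G z)) :=
    ((hIci 0).sub (hIio 0)).const_mul _
  have hB : Integrable (fun z : ℝ => ∑ l ∈ Finset.Icc 1 N,
      ((Set.Ici ((l : ℝ) * Δ)).indicator G z - (Set.Iio (-((l : ℝ) * Δ))).indicator G z)) :=
    integrable_finset_sum _ fun l _ => (hIci _).sub (hIio _)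
  have hIciV : ∀ c : ℝ, 0 ≤ c → ∫ z, (Set.Ici c).indicator G z = p * gaussPDF p c := by
    intro c hc
    rw [integral_indicator measurableSet_Ici, integral_Ici_eq_integral_Ioi]
    exact integral_Ioi_G p c hp hc
  have hIioV : ∀ c : ℝ, 0 ≤ c → ∫ z, (Set.Iio (-c)).indicator G z = -(p * gaussPDF p c) := by
    intro c hc
    rw [integral_indicator measurableSet_Iio]
    exact integral_Iio_G p c hp hc
  have hIio0 : ∫ z, (Set.Iio (0 : ℝ)).indicator G z = -(p * gaussPDF p 0) := by
    have := hIioV 0 le_rfl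
    rwa [neg_zero] at this
  simp only [key]
  rw [integral_const_mul, integral_add hA hB, integral_const_mul,
    integral_sub (hIci 0) (hIio 0)]
  have hsum : ∫ a : ℝ, ∑ l ∈ Finset.Icc 1 N,
      ((Set.Ici ((l : ℝ) * Δ)).indicator G a - (Set.Iio (-((l : ℝ) * Δ))).indicator G a)
      = ∑ l ∈ Finset.Icc 1 N, ∫ a : ℝ,
        ((Set.Ici ((l : ℝ) * Δ)).indicator G a - (Set.Iio (-((l : ℝ) * Δ))).indicator G a) :=
    integral_finset_sum _ (fun l _ => (hIci _).sub (hIio _))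
  rw [hsum, hIciV 0 le_rfl, hIio0]
  rw [Finset.sum_congr rfl (fun l hl => by
    rw [integral_sub (hIci _) (hIio _), hIciV ((l : ℝ) * Δ)
        (mul_nonneg (Nat.cast_nonneg l) hΔ.le),
      hIioV ((l : ℝ) * Δ) (mul_nonneg (Nat.cast_nonneg l) hΔ.le)])]
  have hg0 : gaussPDF p 0 = (Real.sqrt (2 * Real.pi * p))⁻¹ := by
    simp [gaussPDF]
  have hgl : ∀ l : ℕ, gaussPDF p ((l : ℝ) * Δ)
      = (Real.sqrt (2 * Real.pi * p))⁻¹ * Real.exp (-((l : ℝ) ^ 2 * Δ ^ 2) / (2 * p)) := by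
    intro l
    rw [gaussPDF, show ((l : ℝ) * Δ) ^ 2 = (l : ℝ) ^ 2 * Δ ^ 2 from mul_pow _ _ _]
  rw [hNidx]
  rw [Finset.sum_congr rfl (fun l hl => by
    rw [hgl l,
      show p * ((Real.sqrt (2 * Real.pi * p))⁻¹ * Real.exp (-((l : ℝ) ^ 2 * Δ ^ 2) / (2 * p)))
          - -(p * ((Real.sqrt (2 * Real.pi * p))⁻¹
            * Real.exp (-((l : ℝ) ^ 2 * Δ ^ 2) / (2 * p))))
        = (2 * p * (Real.sqrt (2 * Real.pi * p))⁻¹)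
            * Real.exp (-((l : ℝ) ^ 2 * Δ ^ 2) / (2 * p)) by ring])]
  rw [← Finset.mul_sum, hg0]
  have hsqrt : Real.sqrt (2 * Real.pi * p) ≠ 0 := by
    positivity
  field_simp
  ring
end

section
/- Let α ≥ 1 be an integer, L = 2^α, Δ > 0 and p > 0. For the midrise uniform quantizer h_{L,Δ} and the centered Gaussian density f_p, the normalized output power b := (1/p) ∫_{-∞}^{∞} h_{L,Δ}(z)² · f_p(z) dz satisfies b = (Δ²/p) · (1/4 + 4·Σ_{l=1}^{L/2−1} l · Q(lΔ/√p)), where Q is the Gaussian Q-function. (Lemma 1, formula for b.) -/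
open MeasureTheory Real Finset

/-- The Gaussian Q-function. -/
noncomputable def Qfun (x : ℝ) : ℝ :=
  ∫ t in Set.Ioi x, (Real.sqrt (2 * Real.pi))⁻¹ * Real.exp (-(t ^ 2) / 2)

lemma gaussPDF_eq (p : ℝ) : gaussPDF p = fun z =>
    (Real.sqrt (2 * Real.pi * p))⁻¹ * Real.exp (-(2*p)⁻¹ * z ^ 2) := by
  funext z; rw [gaussPDF]; ring_nf

lemma integrable_gaussPDF {p : ℝ} (hp : 0 < p) : Integrable (gaussPDF p) := by
  rw [gaussPDF_eq]
  exact (integrable_exp_neg_mul_sq (by positivity)).const_mul _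

lemma integral_gaussPDF {p : ℝ} (hp : 0 < p) : ∫ z : ℝ, gaussPDF p z = 1 := by
  rw [gaussPDF_eq]
  rw [MeasureTheory.integral_const_mul, integral_gaussian]
  have h1 : Real.pi / (2*p)⁻¹ = 2 * Real.pi * p := by field_simp
  rw [h1, inv_mul_cancel₀]
  positivity

lemma gaussPDF_neg (p z : ℝ) : gaussPDF p (-z) = gaussPDF p z := by
  simp [gaussPDF, neg_pow]

lemma integral_gaussPDF_Ioi {p : ℝ} (hp : 0 < p) (a : ℝ) :
    ∫ z in Set.Ioi a, gaussPDF p z = Qfun (a / Real.sqrt p) := by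
  have hs : (0:ℝ) < Real.sqrt p := Real.sqrt_pos.mpr hp
  have h := MeasureTheory.integral_comp_mul_left_Ioi (gaussPDF p) (a / Real.sqrt p) hs
  rw [mul_div_cancel₀ _ hs.ne'] at h
  have h2 : ∀ t : ℝ, gaussPDF p (Real.sqrt p * t)
      = (Real.sqrt p)⁻¹ * ((Real.sqrt (2 * Real.pi))⁻¹ * Real.exp (-(t ^ 2) / 2)) := by
    intro t
    rw [gaussPDF]
    have : (Real.sqrt p * t) ^ 2 = p * t ^ 2 := by
      rw [mul_pow, Real.sq_sqrt hp.le]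
    rw [this]
    have h3 : Real.sqrt (2 * Real.pi * p) = Real.sqrt (2 * Real.pi) * Real.sqrt p := by
      rw [← Real.sqrt_mul (by positivity)]
    rw [h3, mul_inv]
    have h4 : -(p * t ^ 2) / (2 * p) = -(t ^ 2) / 2 := by field_simp
    rw [h4]; ring
  simp_rw [h2] at h
  rw [MeasureTheory.integral_const_mul] at h
  have := congrArg (fun x => Real.sqrt p * x) h
  simp only [smul_eq_mul, ← mul_assoc, mul_inv_cancel₀ hs.ne', one_mul] at this
  rw [← this, Qfun]

lemma integral_gaussPDF_abs_ge {p : ℝ} (hp : 0 < p) {a : ℝ} (ha : 0 < a) :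
    ∫ z in {w : ℝ | a ≤ |w|}, gaussPDF p z = 2 * Qfun (a / Real.sqrt p) := by
  have hset : {w : ℝ | a ≤ |w|} = Set.Iic (-a) ∪ Set.Ici a := by
    ext w
    simp only [Set.mem_setOf_eq, Set.mem_union, Set.mem_Iic, Set.mem_Ici, le_abs, le_neg]
    tauto
  rw [hset, MeasureTheory.setIntegral_union
    (by rw [Set.disjoint_left]; intro x hx hx2; simp at hx hx2; linarith)
    measurableSet_Ici ((integrable_gaussPDF hp).integrableOn)
    ((integrable_gaussPDF hp).integrableOn)]
  have h1 : ∫ z in Set.Iic (-a), gaussPDF p z = ∫ z in Set.Ioi a, gaussPDF p z := by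
    have := integral_comp_neg_Iic (-a) (gaussPDF p)
    simp_rw [gaussPDF_neg, neg_neg] at this
    exact this
  rw [h1, MeasureTheory.integral_Ici_eq_integral_Ioi, integral_gaussPDF_Ioi hp]
  ring

lemma sum_Icc_two_mul (m : ℕ) : ∑ k ∈ Finset.Icc 1 m, (2*(k:ℝ)) = m*(m+1) := by
  induction m with
  | zero => simp
  | succ n ih =>
      rw [Finset.sum_Icc_succ_top (by omega), ih]
      push_cast; ring

lemma midrise_sq_nonneg_eq (N : ℕ) (hN : 1 ≤ N) {Δ : ℝ} (hΔ : 0 < Δ) {z : ℝ} (hz : 0 ≤ z) :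
    (midrise (2*N) Δ z)^2
      = Δ^2 * (1/4 + ∑ k ∈ Finset.Icc 1 (N-1), 2*(k:ℝ) * (if (k:ℝ)*Δ ≤ z then 1 else 0)) := by
  have hN' : (1:ℝ) ≤ (N:ℝ) := by exact_mod_cast hN
  have hcast : ((N-1:ℕ):ℝ) = (N:ℝ) - 1 := by
    push_cast [Nat.cast_sub hN]; ring
  rw [midrise]
  rw [if_neg (by push_cast; nlinarith)]
  push_cast
  by_cases c2 : (2*(N:ℝ)/2 - 1) * Δ ≤ z
  · rw [if_pos c2]
    have hsum : ∑ k ∈ Finset.Icc 1 (N-1), 2*(k:ℝ) * (if (k:ℝ)*Δ ≤ z then 1 else 0)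
        = ∑ k ∈ Finset.Icc 1 (N-1), 2*(k:ℝ) := by
      refine Finset.sum_congr rfl fun k hk => ?_
      have hk2 : (k:ℝ) ≤ (N:ℝ) - 1 := by
        have := (Finset.mem_Icc.mp hk).2
        have : (k:ℝ) ≤ ((N-1:ℕ):ℝ) := by exact_mod_cast this
        linarith [hcast ▸ this]
      rw [if_pos (by nlinarith), mul_one]
    rw [hsum, sum_Icc_two_mul, hcast]
    ring
  · rw [if_neg c2]
    push_neg at c2
    set m : ℕ := (⌊z / Δ⌋).toNat with hm
    have hfl0 : 0 ≤ ⌊z / Δ⌋ := Int.floor_nonneg.mpr (div_nonneg hz hΔ.le)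
    have hmc : ((⌊z / Δ⌋ : ℤ) : ℝ) = (m:ℝ) := by
      rw [hm]; exact_mod_cast (Int.toNat_of_nonneg hfl0).symm
    have hmle : (m:ℝ) ≤ z / Δ := hmc ▸ Int.floor_le _
    have hmlt : z / Δ < (m:ℝ) + 1 := by
      have := Int.lt_floor_add_one (z / Δ)
      push_cast [hmc] at this
      linarith [hmc ▸ this]
    have hmN : m ≤ N - 1 := by
      have h1 : z / Δ < (N:ℝ) - 1 := by
        rw [div_lt_iff₀ hΔ]; nlinarith
      have h2 : (m:ℝ) < (N:ℝ) - 1 := lt_of_le_of_lt hmle h1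
      have : (m:ℝ) < ((N-1:ℕ):ℝ) := by rw [hcast]; exact h2
      have := Nat.cast_lt.mp this
      omega
    have hite : ∀ k ∈ Finset.Icc 1 (N-1),
        2*(k:ℝ) * (if (k:ℝ)*Δ ≤ z then 1 else 0) = if k ≤ m then 2*(k:ℝ) else 0 := by
      intro k _
      by_cases h : k ≤ m
      · rw [if_pos h, if_pos, mul_one]
        have hk : (k:ℝ) ≤ (m:ℝ) := by exact_mod_cast h
        have : (k:ℝ) ≤ z / Δ := le_trans hk hmle
        calc (k:ℝ)*Δ ≤ (z/Δ)*Δ := by nlinarith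
          _ = z := div_mul_cancel₀ z hΔ.ne'
      · rw [if_neg h, if_neg, mul_zero]
        have hk : (m:ℝ) + 1 ≤ (k:ℝ) := by exact_mod_cast Nat.succ_le_of_lt (Nat.lt_of_not_le h)
        intro hc
        have : z / Δ < (k:ℝ) := lt_of_lt_of_le hmlt hk
        rw [div_lt_iff₀ hΔ] at this
        linarith
    rw [Finset.sum_congr rfl hite, Finset.sum_ite, Finset.sum_const_zero, add_zero]
    have hfil : (Finset.Icc 1 (N-1)).filter (· ≤ m) = Finset.Icc 1 m := by
      ext k; simp only [Finset.mem_filter, Finset.mem_Icc]; omega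
    rw [hfil, sum_Icc_two_mul, hmc]
    ring

lemma midrise_neg_z (N : ℕ) (hN : 1 ≤ N) {Δ z : ℝ} (hΔ : 0 < Δ)
    (hz : z < 0) (hlat : ∀ n : ℤ, z ≠ (n:ℝ) * Δ) :
    midrise (2*N) Δ z = - midrise (2*N) Δ (-z) := by
  have hN' : (1:ℝ) ≤ (N:ℝ) := by exact_mod_cast hN
  rw [midrise, midrise]
  push_cast
  have hneg : (-(2*(N:ℝ)) / 2 + 1) * Δ ≤ 0 := by nlinarith
  rw [if_neg (by nlinarith : ¬ (-z < (-(2*(N:ℝ)) / 2 + 1) * Δ))]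
  by_cases c1 : z < (-(2*(N:ℝ)) / 2 + 1) * Δ
  · rw [if_pos c1, if_pos (by nlinarith)]; ring
  · rw [if_neg c1]
    push_neg at c1
    have hstrict : (-(2*(N:ℝ)) / 2 + 1) * Δ < z := by
      rcases lt_or_eq_of_le c1 with h | h
      · exact h
      · exfalso
        refine hlat (1 - N) ?_
        push_cast
        rw [← h]; ring
    rw [if_neg (by nlinarith : ¬ (2*(N:ℝ)/2 - 1) * Δ ≤ z)]
    rw [if_neg (by nlinarith : ¬ (2*(N:ℝ)/2 - 1) * Δ ≤ -z)]
    have hni : ∀ n : ℤ, z / Δ ≠ (n:ℝ) := by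
      intro n hn
      exact hlat n (by field_simp at hn; linarith [hn])
    have hfl : ⌊-z / Δ⌋ = -⌊z / Δ⌋ - 1 := by
      rw [neg_div, Int.floor_eq_iff]
      have h1 := Int.lt_floor_add_one (z / Δ)
      have h2 : ((⌊z / Δ⌋:ℤ):ℝ) < z / Δ := by
        rcases lt_or_eq_of_le (Int.floor_le (z / Δ)) with h | h
        · exact h
        · exact absurd h.symm (hni ⌊z / Δ⌋)
      constructor
      · push_cast; linarith
      · push_cast; linarith
    rw [hfl]
    push_cast
    ring

/-- Lemma 1 of the paper, formula for the normalized quantizer output power `b`. -/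
theorem bussgang_output_power_midrise (α : ℕ) (hα : 1 ≤ α) (Δ p : ℝ) (hΔ : 0 < Δ)
    (hp : 0 < p) :
    (1 / p) * ∫ z : ℝ, (midrise (2 ^ α) Δ z) ^ 2 * gaussPDF p z
      = Δ ^ 2 / p *
        (1 / 4 + 4 * ∑ l ∈ Finset.Icc 1 (2 ^ α / 2 - 1 : ℕ),
            (l : ℝ) * Qfun ((l : ℝ) * Δ / Real.sqrt p)) := by
  obtain ⟨β, rfl⟩ : ∃ β, α = 1 + β := ⟨α - 1, by omega⟩
  set N : ℕ := 2 ^ β with hNdef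
  have hL : 2 ^ (1+β) = 2 * N := by rw [pow_add, pow_one]
  have hN : 1 ≤ N := Nat.one_le_two_pow
  have hdiv : (2 ^ (1+β)) / 2 = N := by omega
  rw [hdiv, hL]
  set F : ℝ → ℝ := fun z => Δ^2/4 * gaussPDF p z + ∑ k ∈ Finset.Icc 1 (N-1),
      Set.indicator {w : ℝ | (k:ℝ)*Δ ≤ |w|} (fun w => 2*(k:ℝ)*Δ^2 * gaussPDF p w) z with hF
  have hmeasset : ∀ k : ℕ, MeasurableSet {w : ℝ | (k:ℝ)*Δ ≤ |w|} :=
    fun k => (isClosed_le continuous_const continuous_abs).measurableSet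
  have hptwise : ∀ z : ℝ, (∀ n : ℤ, z ≠ (n:ℝ)*Δ) →
      (midrise (2*N) Δ z)^2 * gaussPDF p z = F z := by
    intro z hlat
    have key : (midrise (2*N) Δ z)^2
        = Δ^2 * (1/4 + ∑ k ∈ Finset.Icc 1 (N-1),
            2*(k:ℝ) * (if (k:ℝ)*Δ ≤ |z| then 1 else 0)) := by
      rcases le_or_gt 0 z with hz | hz
      · simp only [abs_of_nonneg hz]
        exact midrise_sq_nonneg_eq N hN hΔ hz
      · have hodd : (midrise (2*N) Δ z)^2 = (midrise (2*N) Δ (-z))^2 := by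
          rw [midrise_neg_z N hN hΔ hz hlat]; ring
        rw [hodd]
        simp only [abs_of_neg hz]
        exact midrise_sq_nonneg_eq N hN hΔ (neg_nonneg.mpr hz.le)
    rw [key, hF]
    simp only [Set.indicator_apply, Set.mem_setOf_eq]
    have hterm : ∀ k ∈ Finset.Icc 1 (N-1),
        (if (k:ℝ)*Δ ≤ |z| then 2*(k:ℝ)*Δ^2 * gaussPDF p z else 0)
        = 2*(k:ℝ) * (if (k:ℝ)*Δ ≤ |z| then 1 else 0) * (Δ^2 * gaussPDF p z) := by
      intro k _
      by_cases h : (k:ℝ)*Δ ≤ |z|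
      · simp only [if_pos h]; ring
      · simp only [if_neg h]; ring
    rw [Finset.sum_congr rfl hterm, ← Finset.sum_mul]
    ring
  have hae : (fun z => (midrise (2*N) Δ z)^2 * gaussPDF p z) =ᵐ[volume] F := by
    have hcz : volume (⋃ n : ℤ, {((n:ℝ)*Δ)}) = 0 :=
      (Set.countable_iUnion fun n => Set.countable_singleton _).measure_zero _
    rw [Filter.EventuallyEq, ae_iff]
    refine measure_mono_null (fun z hz => ?_) hcz
    simp only [Set.mem_setOf_eq] at hz
    rw [Set.mem_iUnion]
    by_contra hc
    push_neg at hc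
    exact hz (hptwise z (fun n hn => hc n (by simp [hn])))
  rw [integral_congr_ae hae]
  have hintk : ∀ k : ℕ, Integrable (fun z : ℝ =>
      Set.indicator {w : ℝ | (k:ℝ)*Δ ≤ |w|} (fun w => 2*(k:ℝ)*Δ^2 * gaussPDF p w) z) :=
    fun k => ((integrable_gaussPDF hp).const_mul _).indicator (hmeasset k)
  rw [hF, integral_add ((integrable_gaussPDF hp).const_mul _)
    (integrable_finset_sum _ (fun k _ => hintk k)),
    integral_finset_sum _ (fun k _ => hintk k),
    MeasureTheory.integral_const_mul, integral_gaussPDF hp, mul_one]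
  have hterm2 : ∀ k ∈ Finset.Icc 1 (N-1),
      (∫ z : ℝ, Set.indicator {w : ℝ | (k:ℝ)*Δ ≤ |w|}
          (fun w => 2*(k:ℝ)*Δ^2 * gaussPDF p w) z)
      = 2*(k:ℝ)*Δ^2 * (2 * Qfun ((k:ℝ)*Δ / Real.sqrt p)) := by
    intro k hk
    have hk1 : (1:ℝ) ≤ (k:ℝ) := by exact_mod_cast (Finset.mem_Icc.mp hk).1
    have hka : 0 < (k:ℝ)*Δ := by nlinarith
    rw [MeasureTheory.integral_indicator (hmeasset k), MeasureTheory.integral_const_mul,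
      integral_gaussPDF_abs_ge hp hka]
  rw [Finset.sum_congr rfl hterm2]
  have hsum : ∑ k ∈ Finset.Icc 1 (N-1), 2*(k:ℝ)*Δ^2 * (2 * Qfun ((k:ℝ)*Δ / Real.sqrt p))
      = Δ^2 * (4 * ∑ k ∈ Finset.Icc 1 (N-1), (k:ℝ) * Qfun ((k:ℝ)*Δ / Real.sqrt p)) := by
    rw [Finset.mul_sum, Finset.mul_sum]
    exact Finset.sum_congr rfl fun k _ => by ring
  rw [hsum]
  field_simp
end

section
/- Convexity of the downlink feasibility region (SOCP reformulation of Problem P9): fix K ≥ 1, M ≥ 1, t > 0 and c > 0; for each k let a_k ∈ ℝ^M, for each pair k' ≠ k let d_{k'k} ∈ ℝ^M, and for each pair (k',k) let F_{k'k} be a real symmetric positive-semidefinite M×M matrix. Then the set { W = (w_1,…,w_K) ∈ (ℝ^M)^K : for every k, a_k·w_k ≥ 0 and (a_k·w_k)² ≥ t · ( Σ_{k'≠k} (d_{k'k}·w_{k'})² + Σ_{k'=1}^K w_{k'}ᵀ F_{k'k} w_{k'} + c ) } is a convex subset of (ℝ^M)^K. -/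
open Matrix Finset

private lemma sqrt_am_gm {x y : ℝ} (hx : 0 ≤ x) (hy : 0 ≤ y) :
    2 * (Real.sqrt x * Real.sqrt y) ≤ x + y := by
  nlinarith [sq_nonneg (Real.sqrt x - Real.sqrt y), Real.sq_sqrt hx, Real.sq_sqrt hy]

private lemma two_block {a b c d : ℝ} (ha : 0 ≤ a) (hb : 0 ≤ b) (hc : 0 ≤ c) (hd : 0 ≤ d) :
    Real.sqrt a * Real.sqrt c + Real.sqrt b * Real.sqrt d
      ≤ Real.sqrt (a + b) * Real.sqrt (c + d) := by
  have h := Real.sum_sqrt_mul_sqrt_le (f := fun i : Bool => if i then a else b)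
    (g := fun i : Bool => if i then c else d) Finset.univ
    (by intro i; cases i <;> simpa) (by intro i; cases i <;> simpa)
  simpa [Fintype.sum_bool, add_comm] using h

private lemma psd_symm {m : ℕ} {M : Matrix (Fin m) (Fin m) ℝ} (hM : M.PosSemidef)
    (x y : Fin m → ℝ) : x ⬝ᵥ M *ᵥ y = y ⬝ᵥ M *ᵥ x := by
  have hMt : Mᵀ = M := by
    ext i j
    rw [Matrix.transpose_apply]
    simpa using congrFun (congrFun hM.1 i) j
  calc x ⬝ᵥ M *ᵥ y = x ᵥ* M ⬝ᵥ y := Matrix.dotProduct_mulVec _ _ _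
    _ = x ᵥ* Mᵀ ⬝ᵥ y := by rw [hMt]
    _ = (M *ᵥ x) ⬝ᵥ y := by rw [Matrix.vecMul_transpose]
    _ = y ⬝ᵥ M *ᵥ x := dotProduct_comm _ _

private lemma psd_cs {m : ℕ} {M : Matrix (Fin m) (Fin m) ℝ} (hM : M.PosSemidef)
    (v w : Fin m → ℝ) :
    v ⬝ᵥ M *ᵥ w ≤ Real.sqrt (v ⬝ᵥ M *ᵥ v) * Real.sqrt (w ⬝ᵥ M *ᵥ w) := by
  set p := v ⬝ᵥ M *ᵥ v with hp'
  set r := w ⬝ᵥ M *ᵥ w with hr'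
  set b := v ⬝ᵥ M *ᵥ w with hb'
  have hp : 0 ≤ p := by simpa using hM.dotProduct_mulVec_nonneg v
  have hr : 0 ≤ r := by simpa using hM.dotProduct_mulVec_nonneg w
  have hq : ∀ x : ℝ, 0 ≤ r * (x * x) + (2 * b) * x + p := by
    intro x
    have h0 : 0 ≤ (v + x • w) ⬝ᵥ M *ᵥ (v + x • w) := by simpa using hM.dotProduct_mulVec_nonneg (v + x • w)
    have hx : (v + x • w) ⬝ᵥ M *ᵥ (v + x • w) = r * (x * x) + (2 * b) * x + p := by
      simp only [mulVec_add, mulVec_smul, dotProduct_add, add_dotProduct,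
        dotProduct_smul, smul_dotProduct, smul_eq_mul]
      rw [psd_symm hM w v]
      rw [← hp', ← hr', ← hb']
      ring
    linarith [hx ▸ h0]
  have hdisc := discrim_le_zero hq
  rw [discrim] at hdisc
  have hb2 : b ^ 2 ≤ p * r := by nlinarith
  calc b ≤ |b| := le_abs_self b
    _ = Real.sqrt (b ^ 2) := (Real.sqrt_sq_eq_abs b).symm
    _ ≤ Real.sqrt (p * r) := Real.sqrt_le_sqrt hb2
    _ = Real.sqrt p * Real.sqrt r := Real.sqrt_mul hp r

private lemma key_lemma {t c P R B s1 s2 p q : ℝ} (ht : 0 < t) (hc : 0 < c)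
    (hP : 0 ≤ P) (hR : 0 ≤ R) (hB : B ≤ Real.sqrt P * Real.sqrt R)
    (h1 : t * (P + c) ≤ s1 ^ 2) (h2 : t * (R + c) ≤ s2 ^ 2)
    (hs1 : 0 ≤ s1) (hs2 : 0 ≤ s2) (hp : 0 ≤ p) (hq : 0 ≤ q) (hpq : p + q = 1) :
    t * (p ^ 2 * P + 2 * p * q * B + q ^ 2 * R + c) ≤ (p * s1 + q * s2) ^ 2 := by
  set u1 := Real.sqrt (t * (P + c)) with hu1'
  set u2 := Real.sqrt (t * (R + c)) with hu2'
  have htP : 0 ≤ t * (P + c) := by positivity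
  have htR : 0 ≤ t * (R + c) := by positivity
  have hu1sq : u1 ^ 2 = t * (P + c) := Real.sq_sqrt htP
  have hu2sq : u2 ^ 2 = t * (R + c) := Real.sq_sqrt htR
  have hu1 : u1 ≤ s1 := by
    have := Real.sqrt_le_sqrt h1
    rwa [Real.sqrt_sq hs1] at this
  have hu2 : u2 ≤ s2 := by
    have := Real.sqrt_le_sqrt h2
    rwa [Real.sqrt_sq hs2] at this
  have hu1n : 0 ≤ u1 := Real.sqrt_nonneg _
  have hu2n : 0 ≤ u2 := Real.sqrt_nonneg _
  -- cross term bound : t*B + t*c ≤ u1 * u2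
  have hcross : t * B + t * c ≤ u1 * u2 := by
    have hPR : Real.sqrt P ^ 2 = P := Real.sq_sqrt hP
    have hRR : Real.sqrt R ^ 2 = R := Real.sq_sqrt hR
    have hamgm := sqrt_am_gm hP hR
    have hstep : t * (Real.sqrt P * Real.sqrt R) + t * c ≤ u1 * u2 := by
      have hprod : u1 * u2 = Real.sqrt ((t * (P + c)) * (t * (R + c))) :=
        (Real.sqrt_mul htP _).symm
      have hlhs : 0 ≤ t * (Real.sqrt P * Real.sqrt R) + t * c := by positivity
      rw [hprod, Real.le_sqrt hlhs (by positivity)]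
      have hPRprod : (Real.sqrt P * Real.sqrt R) ^ 2 = P * R := by
        rw [mul_pow, hPR, hRR]
      have hsc : t ^ 2 * c * (2 * (Real.sqrt P * Real.sqrt R)) ≤ t ^ 2 * c * (P + R) :=
        mul_le_mul_of_nonneg_left hamgm (by positivity)
      nlinarith [hPRprod, hsc]
    have hTB : t * B ≤ t * (Real.sqrt P * Real.sqrt R) :=
      mul_le_mul_of_nonneg_left hB ht.le
    linarith
  -- expand
  have hpq2 : p ^ 2 + 2 * p * q + q ^ 2 = 1 := by linear_combination (p + q + 1) * hpq
  have hexp : t * (p ^ 2 * P + 2 * p * q * B + q ^ 2 * R + c) =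
      p ^ 2 * (t * (P + c)) + 2 * p * q * (t * B + t * c) + q ^ 2 * (t * (R + c)) := by
    linear_combination (-(t * c)) * hpq2
  rw [hexp, ← hu1sq, ← hu2sq]
  have h1' : p ^ 2 * u1 ^ 2 + 2 * p * q * (t * B + t * c) + q ^ 2 * u2 ^ 2
      ≤ (p * u1 + q * u2) ^ 2 := by
    have h := mul_le_mul_of_nonneg_left hcross (mul_nonneg hp hq)
    nlinarith [h]
  have h2' : (p * u1 + q * u2) ^ 2 ≤ (p * s1 + q * s2) ^ 2 := by
    have ha : p * u1 + q * u2 ≤ p * s1 + q * s2 := by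
      have h1'' := mul_le_mul_of_nonneg_left hu1 hp
      have h2'' := mul_le_mul_of_nonneg_left hu2 hq
      linarith
    have hb : 0 ≤ p * u1 + q * u2 := by positivity
    exact pow_le_pow_left₀ hb ha 2
  linarith

/-- Convexity of the downlink feasibility region at target SINR `t` (the SOCP
reformulation of Problem P9 of the paper): the set of precoding matrices
`W = (w_1, …, w_K)` satisfying all downlink SINR constraints is convex. -/
theorem downlink_feasibility_convex
    {K M : ℕ} (hK : 1 ≤ K) (hM : 1 ≤ M) (t c : ℝ) (ht : 0 < t) (hc : 0 < c)
    (a : Fin K → Fin M → ℝ) (d : Fin K → Fin K → Fin M → ℝ)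
    (F : Fin K → Fin K → Matrix (Fin M) (Fin M) ℝ)
    (hF : ∀ k' k, (F k' k).PosSemidef) :
    Convex ℝ {W : Fin K → Fin M → ℝ | ∀ k : Fin K,
      0 ≤ a k ⬝ᵥ W k ∧
      t * ((∑ k' ∈ Finset.univ.erase k, (d k' k ⬝ᵥ W k') ^ 2) +
            (∑ k', W k' ⬝ᵥ (F k' k).mulVec (W k')) + c)
        ≤ (a k ⬝ᵥ W k) ^ 2} := by
  intro W1 hW1 W2 hW2 p q hp hq hpq
  intro k
  obtain ⟨hs1n, h1⟩ := hW1 k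
  obtain ⟨hs2n, h2⟩ := hW2 k
  set s1 := a k ⬝ᵥ W1 k with hs1'
  set s2 := a k ⬝ᵥ W2 k with hs2'
  have hcombo : ∀ k' : Fin K, (p • W1 + q • W2) k' = p • W1 k' + q • W2 k' := by
    intro k'; rfl
  have hdotA : a k ⬝ᵥ (p • W1 + q • W2) k = p * s1 + q * s2 := by
    rw [hcombo, dotProduct_add, dotProduct_smul, dotProduct_smul, smul_eq_mul, smul_eq_mul]
  -- Quadratic values
  set Pd := ∑ k' ∈ Finset.univ.erase k, (d k' k ⬝ᵥ W1 k') ^ 2 with hPd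
  set Rd := ∑ k' ∈ Finset.univ.erase k, (d k' k ⬝ᵥ W2 k') ^ 2 with hRd
  set Bd := ∑ k' ∈ Finset.univ.erase k, (d k' k ⬝ᵥ W1 k') * (d k' k ⬝ᵥ W2 k') with hBd
  set PF := ∑ k', W1 k' ⬝ᵥ (F k' k).mulVec (W1 k') with hPF
  set RF := ∑ k', W2 k' ⬝ᵥ (F k' k).mulVec (W2 k') with hRF
  set BF := ∑ k', W1 k' ⬝ᵥ (F k' k).mulVec (W2 k') with hBF
  have hPdn : 0 ≤ Pd := Finset.sum_nonneg fun _ _ => sq_nonneg _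
  have hRdn : 0 ≤ Rd := Finset.sum_nonneg fun _ _ => sq_nonneg _
  have hPFn : 0 ≤ PF := Finset.sum_nonneg fun k' _ => by simpa using (hF k' k).dotProduct_mulVec_nonneg (W1 k')
  have hRFn : 0 ≤ RF := Finset.sum_nonneg fun k' _ => by simpa using (hF k' k).dotProduct_mulVec_nonneg (W2 k')
  -- Expansion of the d-part
  have hdsum : ∑ k' ∈ Finset.univ.erase k, (d k' k ⬝ᵥ (p • W1 + q • W2) k') ^ 2 =
      p ^ 2 * Pd + 2 * p * q * Bd + q ^ 2 * Rd := by
    rw [hPd, hBd, hRd, Finset.mul_sum, Finset.mul_sum, Finset.mul_sum, ← Finset.sum_add_distrib,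
      ← Finset.sum_add_distrib]
    apply Finset.sum_congr rfl
    intro k' _
    rw [hcombo, dotProduct_add, dotProduct_smul, dotProduct_smul, smul_eq_mul, smul_eq_mul]
    ring
  -- Expansion of the F-part
  have hFsum : ∑ k', (p • W1 + q • W2) k' ⬝ᵥ (F k' k).mulVec ((p • W1 + q • W2) k') =
      p ^ 2 * PF + 2 * p * q * BF + q ^ 2 * RF := by
    rw [hPF, hBF, hRF, Finset.mul_sum, Finset.mul_sum, Finset.mul_sum, ← Finset.sum_add_distrib,
      ← Finset.sum_add_distrib]
    apply Finset.sum_congr rfl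
    intro k' _
    rw [hcombo]
    simp only [mulVec_add, mulVec_smul, dotProduct_add, add_dotProduct,
      dotProduct_smul, smul_dotProduct, smul_eq_mul]
    rw [psd_symm (hF k' k) (W2 k') (W1 k')]
    ring
  -- Cross-term bounds
  have hBd_le : Bd ≤ Real.sqrt Pd * Real.sqrt Rd := by
    rw [hBd, hPd, hRd]
    exact Real.sum_mul_le_sqrt_mul_sqrt _ _ _
  have hBF_le : BF ≤ Real.sqrt PF * Real.sqrt RF := by
    calc BF ≤ ∑ k', Real.sqrt (W1 k' ⬝ᵥ (F k' k).mulVec (W1 k')) *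
          Real.sqrt (W2 k' ⬝ᵥ (F k' k).mulVec (W2 k')) := by
          apply Finset.sum_le_sum
          intro k' _
          exact psd_cs (hF k' k) (W1 k') (W2 k')
      _ ≤ Real.sqrt PF * Real.sqrt RF := by
          rw [hPF, hRF]
          exact Real.sum_sqrt_mul_sqrt_le _
            (fun k' => by simpa using (hF k' k).dotProduct_mulVec_nonneg (W1 k'))
            (fun k' => by simpa using (hF k' k).dotProduct_mulVec_nonneg (W2 k'))
  have hB_le : Bd + BF ≤ Real.sqrt (Pd + PF) * Real.sqrt (Rd + RF) :=
    le_trans (add_le_add hBd_le hBF_le) (two_block hPdn hPFn hRdn hRFn)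
  constructor
  · rw [hdotA]
    exact add_nonneg (mul_nonneg hp hs1n) (mul_nonneg hq hs2n)
  · rw [hdotA, hdsum, hFsum]
    have hrw : t * (p ^ 2 * Pd + 2 * p * q * Bd + q ^ 2 * Rd +
        (p ^ 2 * PF + 2 * p * q * BF + q ^ 2 * RF) + c) =
        t * (p ^ 2 * (Pd + PF) + 2 * p * q * (Bd + BF) + q ^ 2 * (Rd + RF) + c) := by ring
    rw [hrw]
    exact key_lemma ht hc (by linarith) (by linarith) hB_le
      (by linarith [h1]) (by linarith [h2]) hs1n hs2n hp hq hpq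
end
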